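/- Let u, v, w ∈ ℤ² be primitive vectors with δ = det(u, v) ≠ 0 and ε = det(v, w) ≠ 0, and set a = δ^{−1}ε^{−1}·det(w, u). Let x (resp. y') be the unique non-negative integer less than |ε| (resp. |δ|) such that (v, w)·[[1, −x],[0, |ε|]]^{−1} (resp. (v, u)·[[1, −y'],[0, |δ|]]^{−1}) is a unimodular integer matrix. Let w' be the last interior vector of the unimodular chain from u to v (i.e. w' = P'·[[0,−1],[1,n'_1]]⋯[[0,−1],[1,n'_{l'}]]·(1,0)ᵀ, where P' is the unimodular matrix of Lemma 2.1 for the pair (u, v) and n'_1, …, n'_{l'} is the Hirzebruch–Jung expansion of |δ|/x'; w' = u when |δ| = 1), and let w'' be the first interior vector of the unimodular chain from v to w (i.e. w'' = P·[[0,−1],[1,n_1]]·(1,0)ᵀ where n_1, …, n_l is the Hirzebruch–Jung expansion of |ε|/x; w'' = w when |ε| = 1). Then det(w'', w') / (det(w', v) · det(v, w'')) = a − x/ε − y'/δ. -/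

import Mathlib

/-- determinant of the 2×2 matrix with columns `v` and `w` -/
def det2 (v w : Fin 2 → ℤ) : ℤ := v 0 * w 1 - v 1 * w 0

/-- the 2×2 matrix with columns `v` and `w` -/
def colMat (v w : Fin 2 → ℤ) : Matrix (Fin 2) (Fin 2) ℤ := !![v 0, w 0; v 1, w 1]

/-- a 2×2 integer matrix is unimodular if its determinant is `±1` -/
def Unimod (A : Matrix (Fin 2) (Fin 2) ℤ) : Prop := A.det = 1 ∨ A.det = -1

/-- a vector of `ℤ²` is primitive if its components are relatively prime -/
def Primitive (v : Fin 2 → ℤ) : Prop := Int.gcd (v 0) (v 1) = 1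

/-- value of the Hirzebruch–Jung continued fraction `n₁ - 1/(n₂ - 1/(⋯ - 1/n_l))` -/
def hjEval : List ℤ → ℚ
  | [] => 0
  | n :: ns => (n : ℚ) - 1 / hjEval ns

/-- The vectors `w_j` of (4.2): for `0 ≤ j ≤ l`,
`w_j = P·[[0,-1],[1,n₁]]⋯[[0,-1],[1,n_j]]·(1,0)ᵀ`, and for `j = l + 1`,
`w_{l+1} = P·[[0,-1],[1,n₁]]⋯[[0,-1],[1,n_l]]·(0,1)ᵀ`.  In particular
`chainVec P ns 0 = v` and `chainVec P ns (ns.length + 1) = w` for the unimodular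
chain from `v` to `w`. -/
def chainVec (P : Matrix (Fin 2) (Fin 2) ℤ) (ns : List ℤ) (j : ℕ) : Fin 2 → ℤ :=
  if j ≤ ns.length then
    (P * ((ns.take j).map fun n => !![0, -1; 1, n]).prod).mulVec ![1, 0]
  else
    (P * (ns.map fun n => !![0, -1; 1, n]).prod).mulVec ![0, 1]

lemma hjKey (ns : List ℤ) (hne : ns ≠ []) (h2 : ∀ n ∈ ns, 2 ≤ n) :
    ∃ a' b' c d : ℤ,
      (ns.map fun n => !![0, -1; 1, n]).prod = !![-a', -b'; c, d] ∧
      0 ≤ a' ∧ a' ≤ c ∧ 1 ≤ b' ∧ b' ≤ d ∧ c < d ∧ b' - a' ≤ d - c ∧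
      b' * c - a' * d = 1 ∧ hjEval ns = (d : ℚ) / (b' : ℚ) := by
  induction ns with
  | nil => exact absurd rfl hne
  | cons n t ih =>
    have hn : 2 ≤ n := h2 n (by simp)
    rcases eq_or_ne t [] with rfl | hte
    · refine ⟨0, 1, 1, n, ?_, by norm_num, by norm_num, by norm_num, by omega,
        by omega, by omega, by ring, ?_⟩
      · simp [Matrix.mul_one]
      · simp [hjEval]
    · obtain ⟨a', b', c, d, hprod, ha0, hac, hb1, hbd, hcd, hdiff, hdet, hval⟩ :=
        ih hte (fun m hm => h2 m (by simp [hm]))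
      refine ⟨c, d, n * c - a', n * d - b', ?_, by omega, by nlinarith, by omega,
        by nlinarith, by nlinarith, by nlinarith, by linarith [hdet], ?_⟩
      · rw [List.map_cons, List.prod_cons, hprod]
        ext i j
        fin_cases i <;> fin_cases j <;>
          simp [Matrix.mul_apply, Fin.sum_univ_two] <;> ring
      · have hd0 : (d : ℚ) ≠ 0 := by exact_mod_cast (by omega : d ≠ 0)
        have hb0 : (b' : ℚ) ≠ 0 := by exact_mod_cast (by omega : b' ≠ 0)
        simp only [hjEval, hval]
        push_cast
        field_simp

lemma chainVec_one (P : Matrix (Fin 2) (Fin 2) ℤ) (ns : List ℤ) (i : Fin 2) :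
    chainVec P ns 1 i = P i 1 := by
  cases ns with
  | nil => simp [chainVec, Matrix.mulVec, dotProduct, Fin.sum_univ_two]
  | cons n t =>
    rw [chainVec, if_pos (by simp), List.take_succ_cons, List.take_zero]
    simp [Matrix.mulVec, Matrix.mul_apply, dotProduct, Fin.sum_univ_two]

lemma final_alg (N W X Y D E s s' : ℚ) (hD : D ≠ 0) (hE : E ≠ 0)
    (hs : s = 1 ∨ s = -1) (hs' : s' = 1 ∨ s' = -1)
    (hkey : E * D * N = W - Y * (s * E) - X * (s' * D)) :
    N / (s' * s) = (s' * D)⁻¹ * (s * E)⁻¹ * W - X / (s * E) - Y / (s' * D) := by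
  rcases hs with rfl | rfl <;> rcases hs' with rfl | rfl <;>
    simp only [neg_one_mul, one_mul, mul_one, neg_neg, inv_neg, div_neg, div_one,
      inv_one, mul_neg, neg_mul, sub_neg_eq_add, neg_sub] <;>
    field_simp <;>
    first
      | linear_combination hkey
      | linear_combination -hkey

/-- Let `w' = chainVec P' ns' ns'.length` be the last interior vector of the unimodular
chain from `u` to `v` and `w'' = chainVec P ns 1` the first interior vector of the
unimodular chain from `v` to `w`.  Then
`det(w'', w') / (det(w', v)·det(v, w'')) = a - x/ε - y'/δ`. -/
theorem chain_corner_ratio (u v w : Fin 2 → ℤ)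
    (hu : Primitive u) (hv : Primitive v) (hw : Primitive w)
    (hδ : det2 u v ≠ 0) (hε : det2 v w ≠ 0)
    (a : ℚ) (ha : a = (det2 u v : ℚ)⁻¹ * (det2 v w : ℚ)⁻¹ * (det2 w u : ℚ))
    -- `x'`, `P'`, `ns'` : the data of Lemma 2.1 and the Hirzebruch–Jung expansion
    -- for the pair `(u, v)`
    (x' : ℤ) (hx'0 : 0 ≤ x') (hx'1 : x' < |det2 u v|)
    (P' : Matrix (Fin 2) (Fin 2) ℤ)
    (hP' : Unimod P') (hP'eq : P' * !![1, -x'; 0, |det2 u v|] = colMat u v)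
    (ns' : List ℤ)
    (hns'1 : |det2 u v| = 1 → ns' = [])
    (hns'2 : 2 ≤ |det2 u v| → (∀ n ∈ ns', 2 ≤ n) ∧
      hjEval ns' = ((|det2 u v| : ℤ) : ℚ) / (x' : ℚ))
    -- `x`, `P`, `ns` : the data of Lemma 2.1 and the Hirzebruch–Jung expansion
    -- for the pair `(v, w)`
    (x : ℤ) (hx0 : 0 ≤ x) (hx1 : x < |det2 v w|)
    (P : Matrix (Fin 2) (Fin 2) ℤ)
    (hP : Unimod P) (hPeq : P * !![1, -x; 0, |det2 v w|] = colMat v w)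
    (ns : List ℤ)
    (hns1 : |det2 v w| = 1 → ns = [])
    (hns2 : 2 ≤ |det2 v w| → (∀ n ∈ ns, 2 ≤ n) ∧
      hjEval ns = ((|det2 v w| : ℤ) : ℚ) / (x : ℚ))
    -- `y'` : the integer of Lemma 2.1 for the pair `(v, u)`
    (y' : ℤ) (hy'0 : 0 ≤ y') (hy'1 : y' < |det2 u v|)
    (hy' : ∃ Q : Matrix (Fin 2) (Fin 2) ℤ, Unimod Q ∧
      Q * !![1, -y'; 0, |det2 u v|] = colMat v u) :
    ((det2 (chainVec P ns 1) (chainVec P' ns' ns'.length) : ℤ) : ℚ) /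
        (((det2 (chainVec P' ns' ns'.length) v : ℤ) : ℚ) *
          ((det2 v (chainVec P ns 1) : ℤ) : ℚ))
      = a - (x : ℚ) / (det2 v w : ℚ) - (y' : ℚ) / (det2 u v : ℚ) := by
  obtain ⟨Q, hQ, hQeq⟩ := hy'
  set D : ℤ := |det2 u v| with hDdef
  set E : ℤ := |det2 v w| with hEdef
  have hD1 : 1 ≤ D := by have := abs_pos.2 hδ; omega
  have hE1 : 1 ≤ E := by have := abs_pos.2 hε; omega
  clear_value D E
  -- extract entries of hPeq
  have hPe := Matrix.ext_iff.2 hPeq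
  have hP00 := hPe 0 0; have hP10 := hPe 1 0
  have hP01 := hPe 0 1; have hP11 := hPe 1 1
  simp [Matrix.mul_apply, Fin.sum_univ_two, colMat] at hP00 hP10 hP01 hP11
  -- extract entries of hP'eq
  have hP'e := Matrix.ext_iff.2 hP'eq
  have hP'00 := hP'e 0 0; have hP'10 := hP'e 1 0
  have hP'01 := hP'e 0 1; have hP'11 := hP'e 1 1
  simp [Matrix.mul_apply, Fin.sum_univ_two, colMat] at hP'00 hP'10 hP'01 hP'11
  -- extract entries of hQeq
  have hQe := Matrix.ext_iff.2 hQeq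
  have hQ00 := hQe 0 0; have hQ10 := hQe 1 0
  have hQ01 := hQe 0 1; have hQ11 := hQe 1 1
  simp [Matrix.mul_apply, Fin.sum_univ_two, colMat] at hQ00 hQ10 hQ01 hQ11
  -- determinants
  have hdetP : P.det * E = det2 v w := by
    have hd := congrArg Matrix.det hPeq
    rw [Matrix.det_mul] at hd
    simp [Matrix.det_fin_two_of, colMat] at hd
    simp only [det2]
    linarith [hd]
  have hdetP' : P'.det * D = det2 u v := by
    have hd := congrArg Matrix.det hP'eq
    rw [Matrix.det_mul] at hd
    simp [Matrix.det_fin_two_of, colMat] at hd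
    simp only [det2]
    linarith [hd]
  -- the first interior vector of the chain from v to w is the second column of P
  set c1 : Fin 2 → ℤ := chainVec P ns 1 with hc1def
  have hc10 : c1 0 = P 0 1 := chainVec_one P ns 0
  have hc11 : c1 1 = P 1 1 := chainVec_one P ns 1
  -- E * c1 = w + x • v
  have hEw0 : E * c1 0 = w 0 + x * v 0 := by
    rw [hc10]; linear_combination hP01 + x * hP00
  have hEw1 : E * c1 1 = w 1 + x * v 1 := by
    rw [hc11]; linear_combination hP11 + x * hP10
  have hdvc1 : det2 v c1 = P.det := by
    rw [det2, hc10, hc11, ← hP00, ← hP10, Matrix.det_fin_two]; ring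
  -- the last interior vector of the chain from u to v
  set c2 : Fin 2 → ℤ := chainVec P' ns' ns'.length with hc2def
  obtain ⟨β, hβ0, hβD, hβe0, hβe1, hdc2v⟩ :
      ∃ β : ℤ, 0 ≤ β ∧ β < D ∧ D * c2 0 = u 0 + β * v 0 ∧
        D * c2 1 = u 1 + β * v 1 ∧ det2 c2 v = P'.det := by
    rcases eq_or_lt_of_le hD1 with hD1' | hD2
    · -- D = 1
      have hns'nil : ns' = [] := hns'1 hD1'.symm
      have hc2 : ∀ i, c2 i = P' i 0 := by
        intro i
        simp [hc2def, chainVec, hns'nil, Matrix.mulVec, dotProduct,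
          Fin.sum_univ_two]
        fin_cases i <;> rfl
      refine ⟨0, le_refl _, by omega, ?_, ?_, ?_⟩
      · rw [hc2 0, hP'00, ← hD1']; ring
      · rw [hc2 1, hP'10, ← hD1']; ring
      · rw [det2, hc2 0, hc2 1, ← hP'01, ← hP'11, Matrix.det_fin_two, ← hD1']
        ring
    · -- 2 ≤ D
      have hD2' : 2 ≤ D := hD2
      obtain ⟨h2all, hval⟩ := hns'2 hD2'
      -- gcd x' D = 1
      have hgcd : Int.gcd x' D = 1 := by
        have d1 : (Int.gcd x' D : ℤ) ∣ x' := Int.gcd_dvd_left x' D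
        have d2 : (Int.gcd x' D : ℤ) ∣ D := Int.gcd_dvd_right x' D
        have e0 : (Int.gcd x' D : ℤ) ∣ v 0 := by
          rw [← hP'01]
          exact dvd_add (dvd_neg.2 (dvd_mul_of_dvd_right d1 _))
            (dvd_mul_of_dvd_right d2 _)
        have e1 : (Int.gcd x' D : ℤ) ∣ v 1 := by
          rw [← hP'11]
          exact dvd_add (dvd_neg.2 (dvd_mul_of_dvd_right d1 _))
            (dvd_mul_of_dvd_right d2 _)
        have := Int.dvd_coe_gcd e0 e1
        rw [hv] at this
        exact_mod_cast Int.eq_one_of_dvd_one (by positivity) this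
      have hx'pos : 0 < x' := by
        rcases eq_or_lt_of_le hx'0 with h | h
        · exfalso
          rw [← h, Int.gcd_zero_left] at hgcd
          omega
        · exact h
      have hx'Q : (x' : ℚ) ≠ 0 := by exact_mod_cast hx'pos.ne'
      have hns'ne : ns' ≠ [] := by
        intro hnil
        rw [hnil] at hval
        simp only [hjEval] at hval
        rcases div_eq_zero_iff.1 hval.symm with h | h
        · have : D = 0 := by exact_mod_cast h
          omega
        · exact hx'Q h
      obtain ⟨a', b', c, d, hprod, ha0, hac, hb1, hbd, hcd, hdiff, hdet, hjval⟩ :=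
        hjKey ns' hns'ne h2all
      -- identify d = D, b' = x'
      have hb'Q : (b' : ℚ) ≠ 0 := by exact_mod_cast (by omega : b' ≠ 0)
      have hcross : (D : ℤ) * b' = d * x' := by
        have h := hval.symm.trans hjval
        rw [div_eq_div_iff hx'Q hb'Q] at h
        exact_mod_cast h
      have hcop_db' : IsCoprime d b' := ⟨-a', c, by linarith⟩
      have hcop_Dx' : IsCoprime D x' :=
        (Int.isCoprime_iff_gcd_eq_one.2 (by rwa [Int.gcd_comm]))
      have hdD : d = D := by
        have h1 : d ∣ D := hcop_db'.dvd_of_dvd_mul_right ⟨x', hcross⟩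
        have h2 : D ∣ d := hcop_Dx'.dvd_of_dvd_mul_right ⟨b', by linarith [hcross]⟩
        exact Int.dvd_antisymm (by omega) (by omega) h1 h2
      have hbx' : b' = x' := by
        have h : D * b' = D * x' := by rw [hcross, hdD]
        exact mul_left_cancel₀ (by omega) h
      subst hdD hbx'
      -- c2 in terms of P'
      have hc2 : ∀ i, c2 i = P' i 0 * (-a') + P' i 1 * c := by
        intro i
        rw [hc2def, chainVec, if_pos le_rfl, List.take_length, hprod]
        simp [Matrix.mulVec, Matrix.mul_apply, dotProduct, Fin.sum_univ_two]
      refine ⟨c, by omega, by omega, ?_, ?_, ?_⟩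
      · rw [hc2 0]
        linear_combination hP'00 + c * hP'01 + P' 0 0 * hdet
      · rw [hc2 1]
        linear_combination hP'10 + c * hP'11 + P' 1 0 * hdet
      · rw [det2, hc2 0, hc2 1, ← hP'01, ← hP'11, Matrix.det_fin_two]
        linear_combination (P' 0 0 * P' 1 1 - P' 0 1 * P' 1 0) * hdet
  -- identify β = y' using Q
  have hQv0 : D * Q 0 1 = u 0 + y' * v 0 := by
    linear_combination hQ01 + y' * hQ00
  have hQv1 : D * Q 1 1 = u 1 + y' * v 1 := by
    linear_combination hQ11 + y' * hQ10
  have hβy' : β = y' := by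
    have hd0 : D ∣ (β - y') * v 0 := ⟨c2 0 - Q 0 1, by linarith⟩
    have hd1 : D ∣ (β - y') * v 1 := ⟨c2 1 - Q 1 1, by linarith⟩
    have hg := Int.dvd_coe_gcd hd0 hd1
    rw [Int.gcd_mul_left, hv] at hg
    have h1 : D ∣ β - y' := (Int.dvd_natAbs).1 (by simpa using hg)
    have h2 := Int.eq_zero_of_abs_lt_dvd h1 (abs_sub_lt_iff.2 ⟨by omega, by omega⟩)
    omega
  rw [hβy'] at hβe0 hβe1
  -- final computation
  have hkey : E * D * det2 c1 c2 = det2 w u - y' * det2 v w - x * det2 u v := by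
    simp only [det2]
    linear_combination (D * c2 1) * hEw0 + (w 0 + x * v 0) * hβe1
      - (D * c2 0) * hEw1 - (w 1 + x * v 1) * hβe0
  -- pass to ℚ
  have hεQ : (det2 v w : ℚ) = (P.det : ℚ) * E := by exact_mod_cast hdetP.symm
  have hδQ : (det2 u v : ℚ) = (P'.det : ℚ) * D := by exact_mod_cast hdetP'.symm
  have hkeyQ : (E : ℚ) * D * (det2 c1 c2 : ℚ)
      = (det2 w u : ℚ) - y' * (det2 v w : ℚ) - x * (det2 u v : ℚ) := by
    exact_mod_cast hkey
  have hDQ : (D : ℚ) ≠ 0 := by exact_mod_cast (by omega : D ≠ 0)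
  have hEQ : (E : ℚ) ≠ 0 := by exact_mod_cast (by omega : E ≠ 0)
  rw [ha, hdc2v, hdvc1]
  rw [hδQ, hεQ] at hkeyQ ⊢
  have hsP : ((P.det : ℤ) : ℚ) = 1 ∨ ((P.det : ℤ) : ℚ) = -1 := by
    rcases hP with h | h
    · left; exact_mod_cast h
    · right; exact_mod_cast h
  have hsP' : ((P'.det : ℤ) : ℚ) = 1 ∨ ((P'.det : ℤ) : ℚ) = -1 := by
    rcases hP' with h | h
    · left; exact_mod_cast h
    · right; exact_mod_cast h
  exact final_alg _ _ _ _ _ _ _ _ hDQ hEQ hsP hsP' hkeyQ
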